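/- arXiv:1310.8502 — 2 statements merged into one kernel-verified Lean document; each statement's English description precedes it below -/
import Mathlib

section
/- Mehler-type kernel estimate: for 0 < r < 1, 0 < |α| < π, and x, y ∈ ℝ^N, setting a_r = Re((1+r²e^{2iα})/(1−r²e^{2iα})) and b_r = Re(2re^{iα}/(1−r²e^{2iα})), one has a_r = (1−r⁴)/((1+r⁴)−2r²cos 2α) > 0 and b_r = 2(r−r³)cos α /(1+r⁴−2r²cos 2α), and consequently sup_{s≥0}(−a_r s² + |b_r| |x| s) = b_r² |x|²/(4 a_r) ≤ 2r²(1−r²)cos²α |x|² / ((r⁴ − 2r² cos 2α + 1)(r²+1)). -/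
/-- Mehler-type kernel estimate: explicit formulas for
`a_r = Re((1+r²e^{2iα})/(1-r²e^{2iα}))` and `b_r = Re(2re^{iα}/(1-r²e^{2iα}))`,
positivity of `a_r`, and the value and bound of `sup_{s≥0}(-a_r s² + |b_r| |x| s)`. -/
theorem mehler_kernel_estimate (N : ℕ) (r α : ℝ) (hr0 : 0 < r) (hr1 : r < 1)
    (hα0 : 0 < |α|) (hαπ : |α| < Real.pi) (x : EuclideanSpace ℝ (Fin N))
    (a b : ℝ)
    (ha : a = ((1 + (r : ℂ) ^ 2 * Complex.exp (2 * α * Complex.I)) /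
      (1 - (r : ℂ) ^ 2 * Complex.exp (2 * α * Complex.I))).re)
    (hb : b = (2 * (r : ℂ) * Complex.exp (α * Complex.I) /
      (1 - (r : ℂ) ^ 2 * Complex.exp (2 * α * Complex.I))).re) :
    a = (1 - r ^ 4) / ((1 + r ^ 4) - 2 * r ^ 2 * Real.cos (2 * α)) ∧
    0 < a ∧
    b = 2 * (r - r ^ 3) * Real.cos α / (1 + r ^ 4 - 2 * r ^ 2 * Real.cos (2 * α)) ∧
    IsGreatest {v : ℝ | ∃ s : ℝ, 0 ≤ s ∧ v = -a * s ^ 2 + |b| * ‖x‖ * s}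
      (b ^ 2 * ‖x‖ ^ 2 / (4 * a)) ∧
    b ^ 2 * ‖x‖ ^ 2 / (4 * a) ≤
      2 * r ^ 2 * (1 - r ^ 2) * Real.cos α ^ 2 * ‖x‖ ^ 2 /
        ((r ^ 4 - 2 * r ^ 2 * Real.cos (2 * α) + 1) * (r ^ 2 + 1)) := by
  have hs := Real.sin_sq_add_cos_sq (2*α)
  have hc2 : Real.cos (2*α) = 2 * Real.cos α ^ 2 - 1 := Real.cos_two_mul α
  have hs2 : Real.sin (2*α) = 2 * Real.sin α * Real.cos α := Real.sin_two_mul α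
  have hD : (0:ℝ) < (1 + r ^ 4) - 2 * r ^ 2 * Real.cos (2 * α) := by
    nlinarith [Real.cos_le_one (2*α), mul_pos (mul_pos (sub_pos.2 hr1) (sub_pos.2 hr1)) hr0,
      sq_nonneg (1 - r^2), mul_le_mul_of_nonneg_left (Real.cos_le_one (2*α)) (by positivity : (0:ℝ) ≤ 2*r^2)]
  have hEq : ((1 - r ^ 2 * Real.cos (2*α)) * (1 - r ^ 2 * Real.cos (2*α)) + r ^ 2 * Real.sin (2*α) * (r ^ 2 * Real.sin (2*α))) = (1 + r ^ 4) - 2 * r ^ 2 * Real.cos (2 * α) := by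
    linear_combination r^4 * hs
  have hN : ((1 - r ^ 2 * Real.cos (2*α)) * (1 - r ^ 2 * Real.cos (2*α)) + r ^ 2 * Real.sin (2*α) * (r ^ 2 * Real.sin (2*α))) ≠ 0 := by rw [hEq]; exact ne_of_gt hD
  have haf : a = (1 - r ^ 4) / ((1 + r ^ 4) - 2 * r ^ 2 * Real.cos (2 * α)) := by
    rw [ha, Complex.div_re]
    simp [Complex.exp_re, Complex.exp_im, Complex.normSq_apply, ← Complex.ofReal_pow]
    rw [← add_div, div_eq_div_iff hN (ne_of_gt hD)]
    linear_combination (-(r^4) * ((1 + r ^ 4) - 2 * r ^ 2 * Real.cos (2*α)) - (1 - r^4) * r^4) * hs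
  have hbf : b = 2 * (r - r ^ 3) * Real.cos α / (1 + r ^ 4 - 2 * r ^ 2 * Real.cos (2 * α)) := by
    rw [hb, Complex.div_re]
    simp [Complex.exp_re, Complex.exp_im, Complex.normSq_apply, ← Complex.ofReal_pow]
    rw [← add_div, div_eq_div_iff hN (ne_of_gt hD)]
    have hss : Real.sin α ^ 2 = 1 - Real.cos α ^ 2 := by nlinarith [Real.sin_sq_add_cos_sq α]
    simp only [hs2, hc2]
    linear_combination (-4*r^3*Real.cos α - 8*r^5*Real.cos α + 8*r^5*Real.cos α^3 - 4*r^7*Real.cos α + 8*r^7*Real.cos α^3) * hss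
  have hr2 : r ^ 2 < 1 := by nlinarith
  have h1r4 : (0:ℝ) < 1 - r ^ 4 := by nlinarith [sq_nonneg r, hr2]
  have hapos : 0 < a := by rw [haf]; positivity
  refine ⟨haf, hapos, hbf, ⟨⟨|b| * ‖x‖ / (2 * a), by positivity, ?_⟩, ?_⟩, ?_⟩
  · have h2a : (2 * a) ≠ 0 := by positivity
    field_simp
    rw [← sq_abs b]
    ring
  · rintro v ⟨s, hs0, rfl⟩
    rw [le_div_iff₀ (by positivity : (0:ℝ) < 4 * a), ← sq_abs b]
    nlinarith [sq_nonneg (2 * a * s - |b| * ‖x‖), hapos]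
  · have hd2 : r ^ 4 - 2 * r ^ 2 * Real.cos (2 * α) + 1 = (1 + r ^ 4) - 2 * r ^ 2 * Real.cos (2 * α) := by ring
    rw [hd2]
    set d := (1 + r ^ 4) - 2 * r ^ 2 * Real.cos (2 * α) with hdd
    have hLHS : b ^ 2 * ‖x‖ ^ 2 / (4 * a) =
        r ^ 2 * (1 - r ^ 2) * Real.cos α ^ 2 * ‖x‖ ^ 2 / (d * (r ^ 2 + 1)) := by
      rw [haf, hbf]
      rw [div_eq_div_iff (by positivity) (by positivity)]
      field_simp
      ring
    rw [hLHS]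
    have hnum : (0:ℝ) ≤ r ^ 2 * (1 - r ^ 2) * Real.cos α ^ 2 * ‖x‖ ^ 2 :=
      mul_nonneg (mul_nonneg (mul_nonneg (by positivity) (by linarith)) (by positivity)) (by positivity)
    have hfrac : (0:ℝ) ≤ r ^ 2 * (1 - r ^ 2) * Real.cos α ^ 2 * ‖x‖ ^ 2 / (d * (r ^ 2 + 1)) :=
      div_nonneg hnum (by positivity)
    have h2 : 2 * r ^ 2 * (1 - r ^ 2) * Real.cos α ^ 2 * ‖x‖ ^ 2 / (d * (r ^ 2 + 1)) =
        2 * (r ^ 2 * (1 - r ^ 2) * Real.cos α ^ 2 * ‖x‖ ^ 2 / (d * (r ^ 2 + 1))) := by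
      ring
    rw [h2]
    linarith
end

section
/- Laplace-type integral evaluation underlying the master formula: for complex ω with Re ω > 0 and a polynomial p on ℝ^N homogeneous of degree n, if for all x ∈ ℂ^N one has c ∫_{ℝ^N} p(y) K(x, 2y) e^{−|y|²} w(y) dy = e^{l(x)} (e^{Δ/4} p)(x), where l(x) = ∑_j x_j², then for all x ∈ ℂ^N, c ∫_{ℝ^N} p(y) K(x, 2y) e^{−ω|y|²} w(y) dy = ω^{−(γ + n + N/2)} e^{l(x)/ω} (e^{(ω/4)Δ} p)(x). Here one uses the rescaling identity (e^{Δ/4} p)(x/√ω) = ω^{−n/2} (e^{(ω/4)Δ} p)(x) valid for operators Δ homogeneous of degree −2 on polynomials, and the homogeneity w(λy) = λ^{2γ} w(y). -/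
open MvPolynomial

open MvPolynomial MeasureTheory Complex Filter Set

lemma eval_homog_smul {N : ℕ} {q : MvPolynomial (Fin N) ℂ} {m : ℕ}
    (hq : q.IsHomogeneous m) (lam : ℂ) (x : Fin N → ℂ) :
    eval (fun j => lam * x j) q = lam ^ m * eval x q := by
  rw [eval_eq', eval_eq', Finset.mul_sum]
  apply Finset.sum_congr rfl
  intro d hd
  have hdeg : ∑ j, d j = m := by
    have h1 : d.degree = m := by
      rw [Finsupp.degree_eq_weight_one]
      exact hq (mem_support_iff.mp hd)
    rw [← h1, Finsupp.degree]
    exact (Finset.sum_subset (Finset.subset_univ _)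
      (fun i _ hi => Finsupp.notMem_support_iff.mp hi)).symm
  rw [← hdeg]
  simp_rw [mul_pow]
  rw [Finset.prod_mul_distrib, Finset.prod_pow_eq_pow_sum]
  ring

lemma pow_homog {N n : ℕ} (Δ : Module.End ℂ (MvPolynomial (Fin N) ℂ))
    (hΔ : ∀ (m : ℕ) (q : MvPolynomial (Fin N) ℂ), q.IsHomogeneous m →
      (m < 2 → Δ q = 0) ∧ (2 ≤ m → (Δ q).IsHomogeneous (m - 2)))
    (p : MvPolynomial (Fin N) ℂ) (hp : p.IsHomogeneous n) :
    ∀ s : ℕ, ((Δ ^ s) p).IsHomogeneous (n - 2 * s) ∧ (n < 2 * s → (Δ ^ s) p = 0) := by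
  intro s
  induction s with
  | zero => exact ⟨by simpa using hp, by omega⟩
  | succ s ih =>
    have hstep : (Δ ^ (s + 1)) p = Δ ((Δ ^ s) p) := by
      rw [pow_succ']; rfl
    rcases ih with ⟨ihhom, ihzero⟩
    by_cases hns : n < 2 * s
    · have h0 : (Δ ^ s) p = 0 := ihzero hns
      rw [hstep, h0, map_zero]
      exact ⟨isHomogeneous_zero _ _ _, fun _ => rfl⟩
    · push_neg at hns
      by_cases h2 : n - 2 * s < 2
      · have h0 : Δ ((Δ ^ s) p) = 0 := (hΔ _ _ ihhom).1 h2
        rw [hstep, h0]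
        exact ⟨isHomogeneous_zero _ _ _, fun _ => rfl⟩
      · push_neg at h2
        have := (hΔ _ _ ihhom).2 h2
        constructor
        · rw [hstep]
          have he : n - 2 * s - 2 = n - 2 * (s + 1) := by omega
          rw [← he]
          exact this
        · intro h; omega

lemma eval_sum_poly {N n : ℕ} (Δ : Module.End ℂ (MvPolynomial (Fin N) ℂ))
    (p : MvPolynomial (Fin N) ℂ) (x : Fin N → ℂ) (z : ℂ) :
    eval x (∑ s ∈ Finset.range (n + 1),
        ((z / 4) ^ s / (Nat.factorial s : ℂ)) • (Δ ^ s) p)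
      = ∑ s ∈ Finset.range (n + 1),
        (z / 4) ^ s / (Nat.factorial s : ℂ) * eval x ((Δ ^ s) p) := by
  rw [map_sum]
  apply Finset.sum_congr rfl
  intro s _
  rw [smul_eq_C_mul, map_mul, eval_C]

variable {N : ℕ}

local notation "E" => EuclideanSpace ℝ (Fin N)

lemma cexp_cont (s : ℂ) : Continuous (fun y : E => Complex.exp (s * (‖y‖ ^ 2 : ℝ))) := by
  fun_prop

lemma norm_integrand (g : E → ℂ) (s : ℂ) (y : E) :
    ‖g y * Complex.exp (-s * (‖y‖ ^ 2 : ℝ))‖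
      = ‖g y‖ * Real.exp (-s.re * ‖y‖ ^ 2) := by
  rw [norm_mul, Complex.norm_exp]
  congr 2
  have h : (-s * ((‖y‖ ^ 2 : ℝ) : ℂ)) = ((‖y‖ ^ 2 : ℝ) : ℂ) * (-s) := by ring
  rw [h, Complex.re_ofReal_mul, Complex.neg_re]
  ring

lemma aesm_g {g : E → ℂ} {ω : ℂ}
    (hI : AEStronglyMeasurable (fun y : E => g y * Complex.exp (-ω * (‖y‖ ^ 2 : ℝ)))) :
    AEStronglyMeasurable g (volume : Measure E) := by
  have : g = fun y => (g y * Complex.exp (-ω * (‖y‖ ^ 2 : ℝ))) * Complex.exp (ω * (‖y‖ ^ 2 : ℝ)) := by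
    funext y
    rw [mul_assoc, ← Complex.exp_add]
    simp
  rw [this]
  exact hI.mul (cexp_cont ω).aestronglyMeasurable

lemma integrable_param {g : E → ℂ} {ω s : ℂ}
    (hI : Integrable (fun y : E => g y * Complex.exp (-ω * (‖y‖ ^ 2 : ℝ))))
    (hs : ω.re ≤ s.re) :
    Integrable (fun y : E => g y * Complex.exp (-s * (‖y‖ ^ 2 : ℝ))) := by
  have hg := aesm_g hI.aestronglyMeasurable
  refine hI.norm.mono' (hg.mul (cexp_cont (-s)).aestronglyMeasurable) ?_
  filter_upwards with y
  rw [norm_integrand, norm_integrand]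
  have : Real.exp (-s.re * ‖y‖ ^ 2) ≤ Real.exp (-ω.re * ‖y‖ ^ 2) := by
    apply Real.exp_le_exp.mpr
    nlinarith [sq_nonneg ‖y‖]
  exact mul_le_mul_of_nonneg_left this (norm_nonneg _)

lemma diffOn_F {g : E → ℂ} {ω : ℂ}
    (hI : Integrable (fun y : E => g y * Complex.exp (-ω * (‖y‖ ^ 2 : ℝ)))) :
    DifferentiableOn ℂ (fun s => ∫ y : E, g y * Complex.exp (-s * (‖y‖ ^ 2 : ℝ)))
      {s : ℂ | ω.re < s.re} := by
  have hg := aesm_g hI.aestronglyMeasurable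
  intro s₀ hs₀
  have hδ : 0 < (s₀.re - ω.re) / 2 := by
    simp only [mem_setOf_eq] at hs₀; linarith
  set δ := (s₀.re - ω.re) / 2 with hδdef
  have key := hasDerivAt_integral_of_dominated_loc_of_deriv_le (μ := (volume : Measure E))
    (F := fun (s : ℂ) (y : E) => g y * Complex.exp (-s * (‖y‖ ^ 2 : ℝ)))
    (F' := fun (s : ℂ) (y : E) => g y * (Complex.exp (-s * (‖y‖ ^ 2 : ℝ)) * (-(‖y‖ ^ 2 : ℝ) : ℂ)))
    (x₀ := s₀)
    (bound := fun y : E => ‖g y‖ * (‖y‖ ^ 2 * Real.exp (-(ω.re + δ) * ‖y‖ ^ 2)))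
    (Metric.ball_mem_nhds s₀ hδ) ?_ ?_ ?_ ?_ ?_ ?_
  · exact (key.2.differentiableAt).differentiableWithinAt
  · filter_upwards with s
    exact hg.mul (cexp_cont (-s)).aestronglyMeasurable
  · exact integrable_param hI (by simp only [mem_setOf_eq] at hs₀; linarith)
  · exact hg.mul (show Continuous (fun y : E =>
      Complex.exp (-s₀ * (‖y‖ ^ 2 : ℝ)) * (-(‖y‖ ^ 2 : ℝ) : ℂ)) by fun_prop).aestronglyMeasurable
  · -- bound
    filter_upwards with y
    intro s hsball
    have hre : ω.re + δ ≤ s.re := by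
      have h1 : |s.re - s₀.re| ≤ ‖s - s₀‖ := by
        simpa using Complex.abs_re_le_norm (s - s₀)
      have h2 : ‖s - s₀‖ < δ := by
        simpa [Complex.dist_eq] using Metric.mem_ball.mp hsball
      have := abs_lt.mp (lt_of_le_of_lt h1 h2)
      simp only [mem_setOf_eq] at hs₀
      rw [hδdef] at *
      linarith [this.1]
    rw [norm_mul, norm_mul, norm_neg]
    have e1 : ‖Complex.exp (-s * ((‖y‖ ^ 2 : ℝ) : ℂ))‖ = Real.exp (-s.re * ‖y‖ ^ 2) := by
      rw [Complex.norm_exp]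
      have h : (-s * ((‖y‖ ^ 2 : ℝ) : ℂ)) = ((‖y‖ ^ 2 : ℝ) : ℂ) * (-s) := by ring
      rw [h, Complex.re_ofReal_mul, Complex.neg_re]; ring_nf
    have e2 : ‖((‖y‖ ^ 2 : ℝ) : ℂ)‖ = ‖y‖ ^ 2 := by
      rw [Complex.norm_real, Real.norm_eq_abs]
      exact abs_of_nonneg (sq_nonneg _)
    rw [e1, e2]
    have e3 : Real.exp (-s.re * ‖y‖ ^ 2) ≤ Real.exp (-(ω.re + δ) * ‖y‖ ^ 2) :=
      Real.exp_le_exp.mpr (by nlinarith [sq_nonneg ‖y‖])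
    calc ‖g y‖ * (Real.exp (-s.re * ‖y‖ ^ 2) * ‖y‖ ^ 2)
        ≤ ‖g y‖ * (Real.exp (-(ω.re + δ) * ‖y‖ ^ 2) * ‖y‖ ^ 2) := by
          apply mul_le_mul_of_nonneg_left _ (norm_nonneg _)
          exact mul_le_mul_of_nonneg_right e3 (sq_nonneg _)
      _ = ‖g y‖ * (‖y‖ ^ 2 * Real.exp (-(ω.re + δ) * ‖y‖ ^ 2)) := by ring
  · -- integrable bound
    apply Integrable.mono' (hI.norm.const_mul δ⁻¹)
    · exact (hg.norm.mul (show Continuous (fun y : E =>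
        ‖y‖ ^ 2 * Real.exp (-(ω.re + δ) * ‖y‖ ^ 2)) by fun_prop).aestronglyMeasurable)
    · filter_upwards with y
      rw [norm_integrand]
      have hb : ‖y‖ ^ 2 * Real.exp (-(ω.re + δ) * ‖y‖ ^ 2) ≤ δ⁻¹ * Real.exp (-ω.re * ‖y‖ ^ 2) := by
        have h1 : Real.exp (-(ω.re + δ) * ‖y‖ ^ 2)
            = Real.exp (-(δ * ‖y‖ ^ 2)) * Real.exp (-ω.re * ‖y‖ ^ 2) := by
          rw [← Real.exp_add]; ring_nf
        rw [h1, ← mul_assoc]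
        have h2 : ‖y‖ ^ 2 * Real.exp (-(δ * ‖y‖ ^ 2)) ≤ δ⁻¹ := by
          have hE := Real.exp_pos (δ * ‖y‖ ^ 2)
          have h3 : δ * ‖y‖ ^ 2 ≤ Real.exp (δ * ‖y‖ ^ 2) := by
            linarith [Real.add_one_le_exp (δ * ‖y‖ ^ 2)]
          have h4 : ‖y‖ ^ 2 * Real.exp (-(δ * ‖y‖ ^ 2)) * δ
              = (δ * ‖y‖ ^ 2) / Real.exp (δ * ‖y‖ ^ 2) := by
            rw [Real.exp_neg]; field_simp
          have h5 : (δ * ‖y‖ ^ 2) / Real.exp (δ * ‖y‖ ^ 2) ≤ 1 := (div_le_one hE).mpr h3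
          calc ‖y‖ ^ 2 * Real.exp (-(δ * ‖y‖ ^ 2))
              = (‖y‖ ^ 2 * Real.exp (-(δ * ‖y‖ ^ 2)) * δ) / δ := by field_simp
            _ = ((δ * ‖y‖ ^ 2) / Real.exp (δ * ‖y‖ ^ 2)) / δ := by rw [h4]
            _ ≤ 1 / δ := by gcongr
            _ = δ⁻¹ := one_div δ
        exact mul_le_mul_of_nonneg_right h2 (Real.exp_pos _).le
      have : ‖g y‖ * (‖y‖ ^ 2 * Real.exp (-(ω.re + δ) * ‖y‖ ^ 2))
          ≤ ‖g y‖ * (δ⁻¹ * Real.exp (-ω.re * ‖y‖ ^ 2)) :=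
        mul_le_mul_of_nonneg_left hb (norm_nonneg _)
      rw [norm_mul]
      calc ‖‖g y‖‖ * ‖‖y‖ ^ 2 * Real.exp (-(ω.re + δ) * ‖y‖ ^ 2)‖
          = ‖g y‖ * (‖y‖ ^ 2 * Real.exp (-(ω.re + δ) * ‖y‖ ^ 2)) := by
            rw [norm_norm, Real.norm_of_nonneg (by positivity)]
        _ ≤ ‖g y‖ * (δ⁻¹ * Real.exp (-ω.re * ‖y‖ ^ 2)) := this
        _ = δ⁻¹ * (‖g y‖ * Real.exp (-ω.re * ‖y‖ ^ 2)) := by ring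
  · -- h_diff
    filter_upwards with y
    intro s _
    set cc : ℂ := ((‖y‖ ^ 2 : ℝ) : ℂ) with hcc
    have h1 : HasDerivAt (fun z : ℂ => -z * cc) (-cc) s := by
      simpa using ((hasDerivAt_id s).neg.mul_const cc)
    have h2 := h1.cexp
    exact h2.const_mul (g y)

lemma tendsto_F {g : E → ℂ} {ω : ℂ}
    (hI : Integrable (fun y : E => g y * Complex.exp (-ω * (‖y‖ ^ 2 : ℝ))))
    {u : ℕ → ℂ} (hu : Tendsto u atTop (nhds ω)) (hre : ∀ k, ω.re ≤ (u k).re) :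
    Tendsto (fun k => ∫ y : E, g y * Complex.exp (-(u k) * (‖y‖ ^ 2 : ℝ))) atTop
      (nhds (∫ y : E, g y * Complex.exp (-ω * (‖y‖ ^ 2 : ℝ)))) := by
  have hg := aesm_g hI.aestronglyMeasurable
  apply tendsto_integral_filter_of_dominated_convergence
    (bound := fun y : E => ‖g y * Complex.exp (-ω * (‖y‖ ^ 2 : ℝ))‖)
  · filter_upwards with k
    exact hg.mul (cexp_cont (-(u k))).aestronglyMeasurable
  · filter_upwards with k
    filter_upwards with y
    rw [norm_integrand, norm_integrand]
    apply mul_le_mul_of_nonneg_left _ (norm_nonneg _)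
    apply Real.exp_le_exp.mpr
    nlinarith [sq_nonneg ‖y‖, hre k]
  · exact hI.norm
  · filter_upwards with y
    have hc : Continuous (fun s : ℂ => g y * Complex.exp (-s * (‖y‖ ^ 2 : ℝ))) := by fun_prop
    exact (hc.tendsto ω).comp hu

-- real prefactor identity
lemma prefactor (N n : ℕ) (γ : ℝ) {a : ℝ} (ha : 0 < a) :
    ((Real.sqrt a ^ N)⁻¹ * (Real.sqrt a)⁻¹ ^ (2 * γ) * (Real.sqrt a)⁻¹ ^ (2 * n) : ℝ)
      = a ^ (-(γ + (n : ℝ) + (N : ℝ) / 2)) := by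
  set t := Real.sqrt a with htdef
  have ht : 0 < t := Real.sqrt_pos.mpr ha
  have h1 : t = a ^ ((1 : ℝ) / 2) := by rw [htdef, Real.sqrt_eq_rpow]
  have h2 : t⁻¹ = a ^ (-(1 : ℝ) / 2) := by
    rw [h1, ← Real.rpow_neg ha.le]
    norm_num
  have h3 : (t ^ N)⁻¹ = a ^ (-(N : ℝ) / 2) := by
    rw [h1, ← Real.rpow_natCast (a ^ ((1:ℝ)/2)) N, ← Real.rpow_mul ha.le]
    rw [← Real.rpow_neg ha.le]
    ring_nf
  have h4 : t⁻¹ ^ (2 * γ) = a ^ (-γ) := by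
    rw [h2, ← Real.rpow_mul ha.le]
    ring_nf
  have h5 : t⁻¹ ^ (2 * n) = a ^ (-(n : ℝ)) := by
    rw [h2, ← Real.rpow_natCast (a ^ (-(1:ℝ)/2)) (2 * n), ← Real.rpow_mul ha.le]
    norm_num
    ring_nf
    rw [Real.rpow_neg ha.le, Real.rpow_natCast, inv_pow]
  rw [h3, h4, h5, ← Real.rpow_add ha, ← Real.rpow_add ha]
  ring_nf

lemma term_id {τ : ℂ} (hτ : τ ≠ 0) {n s : ℕ} (hs : 2 * s ≤ n) (q b : ℂ) :
    τ⁻¹ ^ n * (q * (τ⁻¹ ^ (n - 2 * s) * b)) = τ⁻¹ ^ (2 * n) * (τ ^ (2 * s) * (q * b)) := by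
  have key : τ⁻¹ ^ n * τ⁻¹ ^ (n - 2 * s) = τ⁻¹ ^ (2 * n) * τ ^ (2 * s) := by
    rw [← pow_add]
    have h1 : 2 * n = (n + (n - 2 * s)) + 2 * s := by omega
    rw [h1, pow_add τ⁻¹ (n + (n - 2 * s)) (2 * s), mul_assoc, inv_pow τ (2 * s),
      inv_mul_cancel₀ (pow_ne_zero _ hτ), mul_one]
  linear_combination (q * b) * key

lemma key_real {N n : ℕ} {γ : ℝ} {c : ℝ}
    (K : (Fin N → ℂ) → (Fin N → ℂ) → ℂ)
    (w : EuclideanSpace ℝ (Fin N) → ℝ)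
    (hwhom : ∀ t : ℝ, 0 < t → ∀ y, w (t • y) = t ^ (2 * γ) * w y)
    (hK : ∀ (lam : ℂ) (x y : Fin N → ℂ), K (lam • x) y = K x (lam • y))
    (Δ : Module.End ℂ (MvPolynomial (Fin N) ℂ))
    (hΔ : ∀ (m : ℕ) (q : MvPolynomial (Fin N) ℂ), q.IsHomogeneous m →
      (m < 2 → Δ q = 0) ∧ (2 ≤ m → (Δ q).IsHomogeneous (m - 2)))
    (p : MvPolynomial (Fin N) ℂ) (hp : p.IsHomogeneous n)
    (hyp : ∀ x : Fin N → ℂ,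
      (c : ℂ) * ∫ y : EuclideanSpace ℝ (Fin N),
          eval (fun j => (y j : ℂ)) p * K x (fun j => 2 * (y j : ℂ)) *
            (Real.exp (-‖y‖ ^ 2) : ℂ) * (w y : ℂ)
        = Complex.exp (∑ j, (x j) ^ 2) *
          eval x (∑ s ∈ Finset.range (n + 1),
            (((1 : ℂ) / 4) ^ s / (Nat.factorial s : ℂ)) • (Δ ^ s) p))
    (x : Fin N → ℂ) (a : ℝ) (ha : 0 < a) :
    (c : ℂ) * ∫ y : EuclideanSpace ℝ (Fin N),
        eval (fun j => (y j : ℂ)) p * K x (fun j => 2 * (y j : ℂ)) *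
          Complex.exp (-(a : ℂ) * (‖y‖ ^ 2 : ℝ)) * (w y : ℂ)
      = ((a ^ (-(γ + (n : ℝ) + (N : ℝ) / 2)) : ℝ) : ℂ) *
        Complex.exp ((∑ j, (x j) ^ 2) / (a : ℂ)) *
        ∑ s ∈ Finset.range (n + 1),
          ((a : ℂ) / 4) ^ s / (Nat.factorial s : ℂ) * eval x ((Δ ^ s) p) := by
  classical
  set t := Real.sqrt a with htdef
  have ht : 0 < t := Real.sqrt_pos.mpr ha
  have ht2 : t ^ 2 = a := Real.sq_sqrt ha.le
  have htne : t ≠ 0 := ht.ne'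
  have htC : (t : ℂ) ≠ 0 := by exact_mod_cast htne
  set lamC : ℂ := ((t⁻¹ : ℝ) : ℂ) with hlam
  have hlamC : lamC = (t : ℂ)⁻¹ := by rw [hlam]; push_cast; ring
  set x' : Fin N → ℂ := lamC • x with hx'
  have hx'j : ∀ j, x' j = lamC * x j := fun j => rfl
  set fint : EuclideanSpace ℝ (Fin N) → ℂ := fun y =>
    eval (fun j => (y j : ℂ)) p * K x (fun j => 2 * (y j : ℂ)) *
      Complex.exp (-(a : ℂ) * (‖y‖ ^ 2 : ℝ)) * (w y : ℂ) with hfint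
  set Iy : EuclideanSpace ℝ (Fin N) → ℂ := fun y =>
    eval (fun j => (y j : ℂ)) p * K x' (fun j => 2 * (y j : ℂ)) *
      (Real.exp (-‖y‖ ^ 2) : ℂ) * (w y : ℂ) with hIy
  set A : ℂ := lamC ^ n * ((t⁻¹ ^ (2 * γ) : ℝ) : ℂ) with hA
  -- pointwise identity
  have hpt : ∀ y : EuclideanSpace ℝ (Fin N), fint (t⁻¹ • y) = A * Iy y := by
    intro y
    have hcoord : ∀ j, ((t⁻¹ • y) j : ℝ) = t⁻¹ * y j := fun j => rfl
    have h1 : (fun j => (((t⁻¹ • y) j : ℝ) : ℂ)) = fun j => lamC * (y j : ℂ) := by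
      funext j; rw [hcoord j, hlamC]; push_cast; ring
    have h2 : eval (fun j => (((t⁻¹ • y) j : ℝ) : ℂ)) p = lamC ^ n * eval (fun j => (y j : ℂ)) p := by
      rw [h1]; exact eval_homog_smul hp lamC _
    have h3 : (fun j => 2 * (((t⁻¹ • y) j : ℝ) : ℂ)) = lamC • (fun j => 2 * (y j : ℂ)) := by
      funext j; rw [hcoord j]
      simp only [Pi.smul_apply, smul_eq_mul, hlamC]; push_cast; ring
    have h4 : K x (fun j => 2 * (((t⁻¹ • y) j : ℝ) : ℂ)) = K x' (fun j => 2 * (y j : ℂ)) := by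
      rw [h3, hx', ← hK lamC x _]
    have hnrm : (‖t⁻¹ • y‖ ^ 2 : ℝ) = t⁻¹ ^ 2 * ‖y‖ ^ 2 := by
      rw [norm_smul]
      simp [abs_of_pos (inv_pos.mpr ht), mul_pow]
    have h5 : Complex.exp (-(a : ℂ) * ((‖t⁻¹ • y‖ ^ 2 : ℝ) : ℂ)) = ((Real.exp (-‖y‖ ^ 2) : ℝ) : ℂ) := by
      rw [hnrm]
      have : -(a : ℂ) * ((t⁻¹ ^ 2 * ‖y‖ ^ 2 : ℝ) : ℂ) = ((-‖y‖ ^ 2 : ℝ) : ℂ) := by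
        push_cast
        have h6 : (a : ℂ) * ((t : ℂ)⁻¹) ^ 2 = 1 := by
          have : ((t : ℂ)) ^ 2 = (a : ℂ) := by exact_mod_cast congrArg (fun r : ℝ => (r : ℂ)) ht2
          rw [← this]
          field_simp
        calc -(a : ℂ) * ((t : ℂ)⁻¹ ^ 2 * ((‖y‖ : ℂ)) ^ 2)
            = -((a : ℂ) * ((t : ℂ)⁻¹) ^ 2) * (‖y‖ : ℂ) ^ 2 := by ring
          _ = -(‖y‖ : ℂ) ^ 2 := by rw [h6]; ring
      rw [this, Complex.ofReal_exp]
    have h7 : ((w (t⁻¹ • y) : ℝ) : ℂ) = ((t⁻¹ ^ (2 * γ) : ℝ) : ℂ) * (w y : ℂ) := by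
      rw [hwhom t⁻¹ (inv_pos.mpr ht) y]; push_cast; ring
    rw [hfint]
    simp only
    rw [h2, h4, h5, h7, hIy, hA]
    ring
  -- change of variables
  have hcv : ∫ y : EuclideanSpace ℝ (Fin N), fint y = ((t ^ N : ℝ))⁻¹ • ∫ y, fint (t⁻¹ • y) := by
    have := MeasureTheory.Measure.integral_comp_smul (volume : Measure (EuclideanSpace ℝ (Fin N))) fint t⁻¹
    rw [this]
    rw [smul_smul]
    have hrank : Module.finrank ℝ (EuclideanSpace ℝ (Fin N)) = N := finrank_euclideanSpace_fin
    rw [hrank]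
    have : |((t⁻¹ ^ N)⁻¹ : ℝ)| = t ^ N := by
      rw [_root_.abs_of_nonneg (by positivity), inv_pow, inv_inv]
    rw [this]
    have : ((t ^ N : ℝ))⁻¹ * t ^ N = 1 := by field_simp
    rw [this, one_smul]
  have hIint : ∫ y, fint (t⁻¹ • y) = A * ∫ y, Iy y := by
    have : (fun y : EuclideanSpace ℝ (Fin N) => fint (t⁻¹ • y)) = fun y => A * Iy y := funext hpt
    rw [this, MeasureTheory.integral_const_mul]
  -- assemble
  have hmain : (c : ℂ) * ∫ y, fint y
      = (((t ^ N : ℝ))⁻¹ : ℂ) * A * ((c : ℂ) * ∫ y, Iy y) := by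
    rw [hcv, hIint, Complex.real_smul]
    push_cast
    ring
  rw [hmain, hyp x']
  -- now rewrite RHS of hyp
  have hexp : Complex.exp (∑ j, (x' j) ^ 2) = Complex.exp ((∑ j, (x j) ^ 2) / (a : ℂ)) := by
    congr 1
    have : ∑ j, (x' j) ^ 2 = lamC ^ 2 * ∑ j, (x j) ^ 2 := by
      rw [Finset.mul_sum]
      exact Finset.sum_congr rfl fun j _ => by rw [hx'j j]; ring
    rw [this, hlamC]
    have haC : ((t : ℂ)) ^ 2 = (a : ℂ) := by exact_mod_cast congrArg (fun r : ℝ => (r : ℂ)) ht2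
    rw [div_eq_mul_inv, ← haC]
    ring
  have heval : eval x' (∑ s ∈ Finset.range (n + 1),
      (((1 : ℂ) / 4) ^ s / (Nat.factorial s : ℂ)) • (Δ ^ s) p)
      = ∑ s ∈ Finset.range (n + 1),
        ((1 : ℂ) / 4) ^ s / (Nat.factorial s : ℂ) * (lamC ^ (n - 2 * s) * eval x ((Δ ^ s) p)) := by
    have h0 := eval_sum_poly (n := n) Δ p x' 1
    simp only [one_div] at h0 ⊢
    rw [h0]
    apply Finset.sum_congr rfl
    intro s _
    congr 1
    have hx'fun : x' = fun j => lamC * x j := funext hx'j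
    rw [hx'fun]
    exact eval_homog_smul (pow_homog Δ hΔ p hp s).1 lamC x
  rw [hexp, heval]
  -- final scalar identity
  have hsum : lamC ^ n * ∑ s ∈ Finset.range (n + 1),
      ((1 : ℂ) / 4) ^ s / (Nat.factorial s : ℂ) * (lamC ^ (n - 2 * s) * eval x ((Δ ^ s) p))
      = lamC ^ (2 * n) * ∑ s ∈ Finset.range (n + 1),
        ((a : ℂ) / 4) ^ s / (Nat.factorial s : ℂ) * eval x ((Δ ^ s) p) := by
    rw [Finset.mul_sum, Finset.mul_sum]
    apply Finset.sum_congr rfl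
    intro s hs
    have hsn : s ≤ n := by
      have := Finset.mem_range.mp hs; omega
    by_cases h2s : 2 * s ≤ n
    · have haC : ((t : ℂ)) ^ 2 = (a : ℂ) := by exact_mod_cast congrArg (fun r : ℝ => (r : ℂ)) ht2
      rw [hlamC]
      have hstep := term_id htC h2s (((1 : ℂ) / 4) ^ s / (Nat.factorial s : ℂ)) (eval x ((Δ ^ s) p))
      rw [hstep]
      have hexp2 : ((a : ℂ) / 4) ^ s = (t : ℂ) ^ (2 * s) * ((1 : ℂ) / 4) ^ s := by
        rw [← haC, div_pow, ← pow_mul, one_div, inv_pow, div_eq_mul_inv]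
      rw [hexp2]
      ring
    · have hz : (Δ ^ s) p = 0 := (pow_homog Δ hΔ p hp s).2 (by omega)
      rw [hz]
      simp
  -- combine everything
  have hfinal : (((t ^ N : ℝ))⁻¹ : ℂ) * (((t⁻¹ ^ (2 * γ) : ℝ)) : ℂ) * lamC ^ (2 * n)
      = ((a ^ (-(γ + (n : ℝ) + (N : ℝ) / 2)) : ℝ) : ℂ) := by
    rw [hlamC, ← prefactor N n γ ha, ← htdef]
    push_cast
    ring
  calc (((t ^ N : ℝ))⁻¹ : ℂ) * A * (Complex.exp ((∑ j, (x j) ^ 2) / (a : ℂ)) *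
        ∑ s ∈ Finset.range (n + 1),
          ((1 : ℂ) / 4) ^ s / (Nat.factorial s : ℂ) * (lamC ^ (n - 2 * s) * eval x ((Δ ^ s) p)))
      = (((t ^ N : ℝ))⁻¹ : ℂ) * (((t⁻¹ ^ (2 * γ) : ℝ) : ℂ)) * Complex.exp ((∑ j, (x j) ^ 2) / (a : ℂ)) *
        (lamC ^ n * ∑ s ∈ Finset.range (n + 1),
          ((1 : ℂ) / 4) ^ s / (Nat.factorial s : ℂ) * (lamC ^ (n - 2 * s) * eval x ((Δ ^ s) p))) := by
        rw [hA]; ring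
    _ = (((t ^ N : ℝ))⁻¹ : ℂ) * (((t⁻¹ ^ (2 * γ) : ℝ) : ℂ)) * Complex.exp ((∑ j, (x j) ^ 2) / (a : ℂ)) *
        (lamC ^ (2 * n) * ∑ s ∈ Finset.range (n + 1),
          ((a : ℂ) / 4) ^ s / (Nat.factorial s : ℂ) * eval x ((Δ ^ s) p)) := by rw [hsum]
    _ = ((a ^ (-(γ + (n : ℝ) + (N : ℝ) / 2)) : ℝ) : ℂ) *
        Complex.exp ((∑ j, (x j) ^ 2) / (a : ℂ)) *
        ∑ s ∈ Finset.range (n + 1),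
          ((a : ℂ) / 4) ^ s / (Nat.factorial s : ℂ) * eval x ((Δ ^ s) p) := by
        rw [← hfinal]
        ring


/-- Laplace-type integral evaluation underlying the master formula: from the
`ω = 1` identity, rescaling (for `Δ` lowering homogeneous degree by `2`,
`w` homogeneous of degree `2γ`, and `K(λx,y) = K(x,λy)`) yields the identity
for all `ω` with `Re ω > 0`. -/
theorem laplace_type_integral (N n : ℕ) (γ : ℝ) (c : ℝ) (hc : 0 < c)
    (K : (Fin N → ℂ) → (Fin N → ℂ) → ℂ)
    (w : EuclideanSpace ℝ (Fin N) → ℝ) (hw : ∀ y, 0 ≤ w y)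
    (hwhom : ∀ t : ℝ, 0 < t → ∀ y, w (t • y) = t ^ (2 * γ) * w y)
    (hK : ∀ (lam : ℂ) (x y : Fin N → ℂ), K (lam • x) y = K x (lam • y))
    (Δ : Module.End ℂ (MvPolynomial (Fin N) ℂ))
    (hΔ : ∀ (m : ℕ) (q : MvPolynomial (Fin N) ℂ), q.IsHomogeneous m →
      (m < 2 → Δ q = 0) ∧ (2 ≤ m → (Δ q).IsHomogeneous (m - 2)))
    (p : MvPolynomial (Fin N) ℂ) (hp : p.IsHomogeneous n)
    (hyp : ∀ x : Fin N → ℂ,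
      (c : ℂ) * ∫ y : EuclideanSpace ℝ (Fin N),
          eval (fun j => (y j : ℂ)) p * K x (fun j => 2 * (y j : ℂ)) *
            (Real.exp (-‖y‖ ^ 2) : ℂ) * (w y : ℂ)
        = Complex.exp (∑ j, (x j) ^ 2) *
          eval x (∑ s ∈ Finset.range (n + 1),
            (((1 : ℂ) / 4) ^ s / (Nat.factorial s : ℂ)) • (Δ ^ s) p))
    (ω : ℂ) (hω : 0 < ω.re) :
    ∀ x : Fin N → ℂ,
      (c : ℂ) * ∫ y : EuclideanSpace ℝ (Fin N),
          eval (fun j => (y j : ℂ)) p * K x (fun j => 2 * (y j : ℂ)) *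
            Complex.exp (-ω * (‖y‖ ^ 2 : ℝ)) * (w y : ℂ)
        = ω ^ (-((γ : ℂ) + (n : ℂ) + (N : ℂ) / 2)) *
          Complex.exp ((∑ j, (x j) ^ 2) / ω) *
          eval x (∑ s ∈ Finset.range (n + 1),
            ((ω / 4) ^ s / (Nat.factorial s : ℂ)) • (Δ ^ s) p) := by
  intro x
  classical
  set g : EuclideanSpace ℝ (Fin N) → ℂ := fun y =>
    eval (fun j => (y j : ℂ)) p * K x (fun j => 2 * (y j : ℂ)) * (w y : ℂ) with hg
  have hgarr : ∀ s : ℂ, (fun y : EuclideanSpace ℝ (Fin N) =>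
      eval (fun j => (y j : ℂ)) p * K x (fun j => 2 * (y j : ℂ)) *
        Complex.exp (-s * (‖y‖ ^ 2 : ℝ)) * (w y : ℂ))
      = fun y => g y * Complex.exp (-s * (‖y‖ ^ 2 : ℝ)) := by
    intro s; funext y; rw [hg]; ring
  set L : ℂ := ∑ j, (x j) ^ 2 with hL
  set b : ℕ → ℂ := fun s => eval x ((Δ ^ s) p) with hb
  set Pq : Polynomial ℂ := ∑ s ∈ Finset.range (n + 1),
    Polynomial.C (b s / ((4 : ℂ) ^ s * (Nat.factorial s : ℂ))) * Polynomial.X ^ s with hPqdef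
  have hPq : ∀ z : ℂ, Polynomial.eval z Pq
      = ∑ s ∈ Finset.range (n + 1), (z / 4) ^ s / (Nat.factorial s : ℂ) * b s := by
    intro z
    rw [hPqdef, Polynomial.eval_finset_sum]
    apply Finset.sum_congr rfl
    intro s _
    have h4 : ((4 : ℂ)) ^ s ≠ 0 := by norm_num
    have hf : ((Nat.factorial s : ℂ)) ≠ 0 := by
      exact_mod_cast Nat.cast_ne_zero.mpr (Nat.factorial_ne_zero s)
    simp only [Polynomial.eval_mul, Polynomial.eval_C, Polynomial.eval_pow, Polynomial.eval_X]
    rw [div_pow]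
    field_simp
  set G : ℂ → ℂ := fun z =>
    z ^ (-((γ : ℂ) + (n : ℂ) + (N : ℂ) / 2)) * Complex.exp (L / z) * Polynomial.eval z Pq
    with hG
  -- reduce goal
  have hgoalR : ω ^ (-((γ : ℂ) + (n : ℂ) + (N : ℂ) / 2)) *
      Complex.exp ((∑ j, (x j) ^ 2) / ω) *
      eval x (∑ s ∈ Finset.range (n + 1),
        ((ω / 4) ^ s / (Nat.factorial s : ℂ)) • (Δ ^ s) p) = G ω := by
    rw [eval_sum_poly, hG]
    simp only [hPq ω, hb, hL]
  rw [hgarr ω, hgoalR]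
  -- real-parameter identity
  have hkey : ∀ a : ℝ, 0 < a →
      (c : ℂ) * (∫ y : EuclideanSpace ℝ (Fin N), g y * Complex.exp (-(a : ℂ) * (‖y‖ ^ 2 : ℝ)))
        = G ((a : ℂ)) := by
    intro a ha
    have h0 := key_real K w hwhom hK Δ hΔ p hp hyp x a ha
    rw [hgarr a] at h0
    rw [h0]
    have hcast : ((a ^ (-(γ + (n : ℝ) + (N : ℝ) / 2)) : ℝ) : ℂ)
        = (a : ℂ) ^ (-((γ : ℂ) + (n : ℂ) + (N : ℂ) / 2)) := by
      rw [Complex.ofReal_cpow ha.le]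
      push_cast
      ring_nf
    rw [hcast, hG]
    simp only [hPq, hb, hL]
  by_cases hI : Integrable (fun y : EuclideanSpace ℝ (Fin N) =>
      g y * Complex.exp (-ω * (‖y‖ ^ 2 : ℝ)))
  · -- integrable case: analytic continuation
    set σ := ω.re with hσ
    set U : Set ℂ := {z : ℂ | σ < z.re} with hU
    have hopen : IsOpen U := isOpen_lt continuous_const Complex.continuous_re
    have hpre : IsPreconnected U := (convex_halfSpace_re_gt σ).isPreconnected
    set cF : ℂ → ℂ := fun z =>
      (c : ℂ) * ∫ y : EuclideanSpace ℝ (Fin N), g y * Complex.exp (-z * (‖y‖ ^ 2 : ℝ)) with hcF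
    have hFd : DifferentiableOn ℂ cF U :=
      (differentiableOn_const _).mul (diffOn_F hI)
    have hGd : DifferentiableOn ℂ G U := by
      intro z hz
      have hzre : σ < z.re := hz
      have hz0 : z ≠ 0 := by
        intro h; rw [h] at hzre; simp at hzre; linarith
      have hslit : z ∈ Complex.slitPlane := Complex.mem_slitPlane_iff.mpr (Or.inl (by linarith))
      apply DifferentiableAt.differentiableWithinAt
      apply DifferentiableAt.mul
      apply DifferentiableAt.mul
      · exact differentiableAt_id.cpow (differentiableAt_const _) hslit
      · exact ((differentiableAt_const L).div differentiableAt_id hz0).cexp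
      · exact Pq.differentiable.differentiableAt
    have hEq : EqOn cF G U := by
      apply (hFd.analyticOnNhd hopen).eqOn_of_preconnected_of_frequently_eq
        (hGd.analyticOnNhd hopen) hpre (z₀ := ((σ + 1 : ℝ) : ℂ))
        (by simp [hU, Complex.ofReal_re])
      -- frequently equal near z₀
      set u : ℕ → ℂ := fun k => ((σ + 1 + (1 / (k + 1)) : ℝ) : ℂ) with hu
      have hσpos : 0 < σ := hω
      have hureal : ∀ k : ℕ, 0 < (σ + 1 + (1 / ((k : ℝ) + 1))) := by
        intro k
        have : (0:ℝ) < 1 / ((k : ℝ) + 1) := by positivity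
        linarith
      have htu : Tendsto u atTop (nhdsWithin ((σ + 1 : ℝ) : ℂ) {z | z ≠ ((σ + 1 : ℝ) : ℂ)}) := by
        apply tendsto_nhdsWithin_of_tendsto_nhds_of_eventually_within
        · have h1 : Tendsto (fun k : ℕ => (σ + 1 + (1 / ((k : ℝ) + 1)))) atTop (nhds (σ + 1 + 0)) :=
            tendsto_one_div_add_atTop_nhds_zero_nat.const_add (σ + 1)
          have h2 : Tendsto u atTop (nhds ((σ + 1 + 0 : ℝ) : ℂ)) :=
            (Complex.continuous_ofReal.tendsto _).comp h1
          simpa using h2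
        · filter_upwards with k
          simp only [mem_setOf_eq, hu]
          intro hcon
          have := Complex.ofReal_injective hcon
          have h3 : (1 : ℝ) / ((k : ℝ) + 1) > 0 := by positivity
          nlinarith [this]
      apply htu.frequently
      apply Frequently.of_forall
      intro k
      exact hkey _ (hureal k)
    -- approach ω from the right
    set v : ℕ → ℂ := fun k => ω + ((1 / ((k : ℝ) + 1) : ℝ) : ℂ) with hv
    have hvmem : ∀ k, v k ∈ U := by
      intro k
      simp only [hU, mem_setOf_eq, hv, Complex.add_re, Complex.ofReal_re]
      have : (0 : ℝ) < 1 / ((k : ℝ) + 1) := by positivity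
      linarith
    have hvtend : Tendsto v atTop (nhds ω) := by
      have h1 : Tendsto (fun k : ℕ => (1 / ((k : ℝ) + 1))) atTop (nhds 0) :=
        tendsto_one_div_add_atTop_nhds_zero_nat
      have h2 : Tendsto (fun k : ℕ => ((1 / ((k : ℝ) + 1) : ℝ) : ℂ)) atTop (nhds ((0 : ℝ) : ℂ)) :=
        (Complex.continuous_ofReal.tendsto _).comp h1
      have h3 : Tendsto v atTop (nhds (ω + ((0 : ℝ) : ℂ))) := h2.const_add ω
      simpa using h3
    have hvre : ∀ k, ω.re ≤ (v k).re := by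
      intro k
      simp only [hv, Complex.add_re, Complex.ofReal_re]
      have : (0 : ℝ) < 1 / ((k : ℝ) + 1) := by positivity
      linarith
    have hlim1 : Tendsto (fun k => cF (v k)) atTop (nhds (cF ω)) :=
      (tendsto_F hI hvtend hvre).const_mul _
    have hGcont : ContinuousAt G ω := by
      have hz0 : ω ≠ 0 := by
        intro h
        rw [hσ, h] at hω
        simp at hω
      have hslit : ω ∈ Complex.slitPlane := Complex.mem_slitPlane_iff.mpr (Or.inl hω)
      apply ContinuousAt.mul
      apply ContinuousAt.mul
      · exact continuousAt_id.cpow continuousAt_const hslit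
      · exact (continuousAt_const.div continuousAt_id hz0).cexp
      · exact Pq.differentiable.continuous.continuousAt
    have hlim2 : Tendsto (fun k => cF (v k)) atTop (nhds (G ω)) := by
      have : (fun k => cF (v k)) = fun k => G (v k) := funext fun k => hEq (hvmem k)
      rw [this]
      exact hGcont.tendsto.comp hvtend
    exact tendsto_nhds_unique hlim1 hlim2
  · -- non-integrable case: both sides vanish
    have hzero : ∀ a : ℝ, 0 < a → a ≤ ω.re → Polynomial.eval ((a : ℂ)) Pq = 0 := by
      intro a ha hale
      have hnint : ¬ Integrable (fun y : EuclideanSpace ℝ (Fin N) =>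
          g y * Complex.exp (-(a : ℂ) * (‖y‖ ^ 2 : ℝ))) := by
        intro hcon
        exact hI (integrable_param hcon (by simpa using hale))
      have h0 : (∫ y : EuclideanSpace ℝ (Fin N),
          g y * Complex.exp (-(a : ℂ) * (‖y‖ ^ 2 : ℝ))) = 0 := integral_undef hnint
      have h1 := hkey a ha
      rw [h0, mul_zero] at h1
      have h2 : G ((a : ℂ)) = 0 := h1.symm
      rw [hG] at h2
      simp only at h2
      have hane : ((a : ℂ)) ≠ 0 := by exact_mod_cast ha.ne'
      have hcp : ((a : ℂ)) ^ (-((γ : ℂ) + (n : ℂ) + (N : ℂ) / 2)) ≠ 0 := by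
        intro hcon
        rcases (Complex.cpow_eq_zero_iff _ _).mp hcon with ⟨h3, _⟩
        exact hane h3
      have hexp : Complex.exp (L / (a : ℂ)) ≠ 0 := Complex.exp_ne_zero _
      rcases mul_eq_zero.mp h2 with h3 | h3
      · rcases mul_eq_zero.mp h3 with h4 | h4
        · exact absurd h4 hcp
        · exact absurd h4 hexp
      · exact h3
    have hPq0 : Pq = 0 := by
      apply Polynomial.eq_zero_of_infinite_isRoot
      have hinf : ((fun r : ℝ => (r : ℂ)) '' (Ioo 0 ω.re)).Infinite :=
        (Set.Ioo_infinite hω).image (Complex.ofReal_injective.injOn)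
      apply Set.Infinite.mono _ hinf
      rintro z ⟨r, hr, rfl⟩
      exact hzero r hr.1 hr.2.le
    have hint0 : (∫ y : EuclideanSpace ℝ (Fin N),
        g y * Complex.exp (-ω * (‖y‖ ^ 2 : ℝ))) = 0 := integral_undef hI
    rw [hint0, mul_zero, hG]
    simp only
    rw [hPq0]
    simp
end
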